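/- Let a, b be integers with gcd(a, b) = 1 and let G satisfy G(1) = a, G(2) = b, G(n+2) = G(n) + G(n+1). If a² + ab − b² ≢ 0 (mod 5), then G is complete mod 5: every residue mod 5 occurs among the G(n). If a² + ab − b² ≡ 0 (mod 5), then G is defective mod 5: no G(n) is divisible by 5. -/

import Mathlib

private def gstep (p : ZMod 5 × ZMod 5) : ZMod 5 × ZMod 5 := (p.2, p.1 + p.2)

private lemma gstep20 : ∀ p : ZMod 5 × ZMod 5, gstep^[20] p = p := by decide

private lemma gstep_mod20 (p : ZMod 5 × ZMod 5) (n : ℕ) :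
    gstep^[n] p = gstep^[n % 20] p := by
  induction n using Nat.strong_induction_on with
  | _ n ih =>
    by_cases h : n < 20
    · rw [Nat.mod_eq_of_lt h]
    · have e : n = (n - 20) + 20 := by omega
      rw [e, Function.iterate_add_apply, gstep20, ih (n - 20) (by omega)]
      congr 1; omega

private lemma gcomplete : ∀ p : ZMod 5 × ZMod 5,
    p.1 ^ 2 + p.1 * p.2 - p.2 ^ 2 ≠ 0 →
    ∀ r : ZMod 5, ∃ n, n < 20 ∧ (gstep^[n] p).1 = r := by decide

private lemma gdefect : ∀ p : ZMod 5 × ZMod 5,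
    p.1 ^ 2 + p.1 * p.2 - p.2 ^ 2 = 0 → p ≠ (0, 0) →
    ∀ n, n < 20 → (gstep^[n] p).1 ≠ 0 := by decide

theorem gibonacci_mod_five_dichotomy
    (a b : ℤ) (hab : Int.gcd a b = 1)
    (G : ℕ → ℤ) (h1 : G 1 = a) (h2 : G 2 = b)
    (hrec : ∀ n ≥ 1, G (n + 2) = G n + G (n + 1)) :
    (¬ (5 : ℤ) ∣ (a ^ 2 + a * b - b ^ 2) →
      ∀ r : ℤ, ∃ n ≥ 1, G n ≡ r [ZMOD 5]) ∧
    ((5 : ℤ) ∣ (a ^ 2 + a * b - b ^ 2) →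
      ∀ n ≥ 1, ¬ (5 : ℤ) ∣ G n) := by
  set p : ZMod 5 × ZMod 5 := ((a : ZMod 5), (b : ZMod 5)) with hp
  have key : ∀ n : ℕ, ((G (n + 1) : ZMod 5) = (gstep^[n] p).1) ∧
      ((G (n + 2) : ZMod 5) = (gstep^[n] p).2) := by
    intro n
    induction n with
    | zero => simp [h1, h2, hp]
    | succ n ih =>
      rw [Function.iterate_succ_apply']
      constructor
      · exact ih.2
      · have := hrec (n + 1) (by omega)
        show ((G (n + 1 + 2) : ℤ) : ZMod 5) = (gstep^[n] p).1 + (gstep^[n] p).2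
        rw [this]; push_cast; rw [ih.1, ih.2]
  have hinv : ((a ^ 2 + a * b - b ^ 2 : ℤ) : ZMod 5) = p.1 ^ 2 + p.1 * p.2 - p.2 ^ 2 := by
    push_cast; rfl
  constructor
  · intro hdvd r
    have h0 : p.1 ^ 2 + p.1 * p.2 - p.2 ^ 2 ≠ 0 := by
      rw [← hinv]
      intro h
      exact hdvd ((ZMod.intCast_zmod_eq_zero_iff_dvd _ 5).mp h)
    obtain ⟨n, hn, he⟩ := gcomplete p h0 (r : ZMod 5)
    refine ⟨n + 1, by omega, ?_⟩
    have := (key n).1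
    rw [he] at this
    exact (ZMod.intCast_eq_intCast_iff' _ _ _).mp this
  · intro hdvd n hn hGn
    have h0 : p.1 ^ 2 + p.1 * p.2 - p.2 ^ 2 = 0 := by
      rw [← hinv]
      exact (ZMod.intCast_zmod_eq_zero_iff_dvd _ 5).mpr hdvd
    have hne : p ≠ (0, 0) := by
      intro h
      have ha : (5 : ℤ) ∣ a := by
        have := congrArg Prod.fst h
        exact (ZMod.intCast_zmod_eq_zero_iff_dvd a 5).mp this
      have hb : (5 : ℤ) ∣ b := by
        have := congrArg Prod.snd h
        exact (ZMod.intCast_zmod_eq_zero_iff_dvd b 5).mp this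
      have : (5 : ℤ) ∣ (Int.gcd a b : ℤ) := Int.dvd_coe_gcd ha hb
      rw [hab] at this
      norm_num at this
    obtain ⟨m, rfl⟩ : ∃ m, n = m + 1 := ⟨n - 1, by omega⟩
    have hz : ((G (m + 1) : ℤ) : ZMod 5) = 0 :=
      (ZMod.intCast_zmod_eq_zero_iff_dvd _ 5).mpr hGn
    have := (key m).1
    rw [hz, gstep_mod20] at this
    exact gdefect p h0 hne (m % 20) (Nat.mod_lt _ (by norm_num)) this.symm
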